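/- Let (X, (Ψ_t)_{t≥0}, ν) be a measure-preserving flow on a metric space such that the flow has bounded speed (there is K ≥ 0 with d(Ψ_t(x), Ψ_{t+T}(x)) ≤ K·T for all x, t, T > 0) and is Lipschitz (there is L > 0 with d(Ψ_t(x), Ψ_t(y)) ≤ L^t·d(x,y)). Define S_{t,r}(x,y) = ∫₀^t ∫₀^t 1_{B(Ψ_{t₁}(x), r)}(Ψ_{t₂}(y)) dt₂ dt₁ and M_t(x,y) = min_{0≤t₁,t₂<t} d(Ψ_{t₁}(x), Ψ_{t₂}(y)). Then for all t > 1 > r > 0, the inclusion {(x,y) : M_t(x,y) < r} ⊆ {(x,y) : S_{2t, K₀·r}(x,y) ≥ r} holds, where K₀ = K + max{1, L}. -/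

import Mathlib

open MeasureTheory Filter Metric Topology

/-- Shortest distance between two orbit segments of a flow up to time `t`. -/
noncomputable def flowShortestDist {X : Type*} [PseudoMetricSpace X]
    (Ψ : ℝ → X → X) (t : ℝ) (x y : X) : ℝ :=
  sInf {d' | ∃ t₁ ∈ Set.Ico (0:ℝ) t, ∃ t₂ ∈ Set.Ico (0:ℝ) t, d' = dist (Ψ t₁ x) (Ψ t₂ y)}

/-- The quantity `S_{t,r}(x,y) = ∫₀ᵗ∫₀ᵗ 1_{B(Ψ_{t₁}x, r)}(Ψ_{t₂}y) dt₂ dt₁`. -/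
noncomputable def flowCorrSum {X : Type*} [PseudoMetricSpace X]
    (Ψ : ℝ → X → X) (t r : ℝ) (x y : X) : ℝ :=
  ∫ t₁ in Set.Icc (0:ℝ) t, ∫ t₂ in Set.Icc (0:ℝ) t,
    Set.indicator (ball (Ψ t₁ x) r) (fun _ => (1:ℝ)) (Ψ t₂ y)

/-- For a measure-preserving Lipschitz flow with bounded speed, for all `t > 1 > r > 0`,
`{(x,y) : M_t(x,y) < r} ⊆ {(x,y) : S_{2t, K₀ r}(x,y) ≥ r}` with `K₀ = K + max 1 L`. -/
theorem flow_shortest_distance_inclusion {X : Type*} [MetricSpace X] [MeasurableSpace X]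
    (Ψ : ℝ → X → X)
    (hΨ0 : ∀ x, Ψ 0 x = x)
    (hΨadd : ∀ s t : ℝ, ∀ x, Ψ (s + t) x = Ψ s (Ψ t x))
    (ν : Measure X) (hprob : IsProbabilityMeasure ν)
    (hinv : ∀ t : ℝ, MeasurePreserving (Ψ t) ν ν)
    (K L : ℝ) (hK : 0 ≤ K) (hL : 0 < L)
    (hspeed : ∀ (x : X) (t T : ℝ), 0 ≤ t → 0 < T → dist (Ψ t x) (Ψ (t + T) x) ≤ K * T)
    (hLip : ∀ (x y : X) (t : ℝ), 0 ≤ t → dist (Ψ t x) (Ψ t y) ≤ L ^ t * dist x y)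
    (t r : ℝ) (hr : 0 < r) (hrt : r < 1) (ht : 1 < t) :
    {p : X × X | flowShortestDist Ψ t p.1 p.2 < r} ⊆
      {p : X × X | r ≤ flowCorrSum Ψ (2 * t) ((K + max 1 L) * r) p.1 p.2} := by
  rintro ⟨x, y⟩ hp
  simp only [Set.mem_setOf_eq] at hp ⊢
  set ρ : ℝ := (K + max 1 L) * r with hρdef
  have hmax1 : (1:ℝ) ≤ max 1 L := le_max_left _ _
  have hρpos : 0 < ρ := by
    have : (0:ℝ) < K + max 1 L := by nlinarith
    exact mul_pos this hr
  -- extract witnesses from sInf < r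
  have hSne : Set.Nonempty {d' | ∃ t₁ ∈ Set.Ico (0:ℝ) t, ∃ t₂ ∈ Set.Ico (0:ℝ) t,
      d' = dist (Ψ t₁ x) (Ψ t₂ y)} := by
    refine ⟨dist (Ψ 0 x) (Ψ 0 y), 0, ⟨le_refl _, by linarith⟩, 0, ⟨le_refl _, by linarith⟩, rfl⟩
  have hSbdd : BddBelow {d' | ∃ t₁ ∈ Set.Ico (0:ℝ) t, ∃ t₂ ∈ Set.Ico (0:ℝ) t,
      d' = dist (Ψ t₁ x) (Ψ t₂ y)} := by
    refine ⟨0, ?_⟩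
    rintro d ⟨t₁, _, t₂, _, rfl⟩
    exact dist_nonneg
  rw [flowShortestDist, csInf_lt_iff hSbdd hSne] at hp
  obtain ⟨d', ⟨t₁, ht₁, t₂, ht₂, rfl⟩, hdist⟩ := hp
  obtain ⟨ht₁0, ht₁t⟩ := ht₁
  obtain ⟨ht₂0, ht₂t⟩ := ht₂
  -- speed bound in both directions
  have hsp : ∀ (z : X) (a b : ℝ), 0 ≤ a → 0 ≤ b → dist (Ψ a z) (Ψ b z) ≤ K * |a - b| := by
    have h2 : ∀ (z : X) (a b : ℝ), 0 ≤ a → a ≤ b → dist (Ψ a z) (Ψ b z) ≤ K * (b - a) := by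
      intro z a b ha hab
      rcases eq_or_lt_of_le hab with h | h
      · subst h; simp
      · have := hspeed z a (b - a) ha (by linarith)
        have e : a + (b - a) = b := by ring
        rwa [e] at this
    intro z a b ha hb
    rcases le_total a b with h | h
    · rw [abs_of_nonpos (by linarith), neg_sub]
      exact h2 z a b ha h
    · rw [abs_of_nonneg (by linarith), dist_comm]
      exact h2 z b a hb h
  -- rpow bound
  have hLmax : ∀ u : ℝ, 0 ≤ u → u ≤ 1 → L ^ u ≤ max 1 L := by
    intro u h0 h1
    rcases le_total L 1 with h | h
    · exact le_max_of_le_left (Real.rpow_le_one hL.le h h0)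
    · calc L ^ u ≤ L ^ (1:ℝ) := Real.rpow_le_rpow_of_exponent_le h h1
        _ = L := Real.rpow_one L
        _ ≤ max 1 L := le_max_right _ _
  -- key pointwise estimate
  have hkey : ∀ t₁' ∈ Set.Icc t₁ (t₁ + 1), ∀ t₂' : ℝ, 0 ≤ t₂' →
      |t₂' - (t₂ + (t₁' - t₁))| ≤ r → Ψ t₂' y ∈ ball (Ψ t₁' x) ρ := by
    intro t₁' ht₁' t₂' h0 habs
    set u := t₁' - t₁ with hu
    have hu0 : 0 ≤ u := by simp only [hu]; linarith [ht₁'.1]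
    have hu1 : u ≤ 1 := by simp only [hu]; linarith [ht₁'.2]
    have e1 : Ψ t₁' x = Ψ u (Ψ t₁ x) := by
      rw [← hΨadd]; congr 1; simp only [hu]; ring
    have e2 : Ψ (t₂ + u) y = Ψ u (Ψ t₂ y) := by
      rw [← hΨadd]; congr 1; ring
    have h1 : dist (Ψ t₁' x) (Ψ (t₂ + u) y) < max 1 L * r := by
      rw [e1, e2]
      calc dist (Ψ u (Ψ t₁ x)) (Ψ u (Ψ t₂ y)) ≤ L ^ u * dist (Ψ t₁ x) (Ψ t₂ y) :=
            hLip _ _ u hu0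
        _ < L ^ u * r := by
            exact mul_lt_mul_of_pos_left hdist (Real.rpow_pos_of_pos hL u)
        _ ≤ max 1 L * r := mul_le_mul_of_nonneg_right (hLmax u hu0 hu1) hr.le
    have h2 : dist (Ψ (t₂ + u) y) (Ψ t₂' y) ≤ K * r := by
      calc dist (Ψ (t₂ + u) y) (Ψ t₂' y) ≤ K * |(t₂ + u) - t₂'| :=
            hsp y _ _ (by linarith) h0
        _ = K * |t₂' - (t₂ + u)| := by rw [abs_sub_comm]
        _ ≤ K * r := mul_le_mul_of_nonneg_left habs hK
    have htri := dist_triangle (Ψ t₁' x) (Ψ (t₂ + u) y) (Ψ t₂' y)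
    rw [mem_ball]
    rw [dist_comm]
    have : ρ = max 1 L * r + K * r := by rw [hρdef]; ring
    linarith
  -- continuous extensions of the orbit maps
  set gx : ℝ → X := fun s => Ψ (max s 0) x with hgx
  set gy : ℝ → X := fun s => Ψ (max s 0) y with hgy
  have hgcont : ∀ z : X, Continuous (fun s : ℝ => Ψ (max s 0) z) := by
    intro z
    refine (LipschitzWith.of_dist_le_mul (K := ⟨K, hK⟩) ?_).continuous
    intro a b
    calc dist (Ψ (max a 0) z) (Ψ (max b 0) z) ≤ K * |max a 0 - max b 0| :=
          hsp z _ _ (le_max_right _ _) (le_max_right _ _)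
      _ ≤ K * |a - b| := mul_le_mul_of_nonneg_left (abs_max_sub_max_le_abs a b 0) hK
      _ = (⟨K, hK⟩ : NNReal) * dist a b := by rw [Real.dist_eq]
  have hgxc : Continuous gx := hgcont x
  have hgyc : Continuous gy := hgcont y
  -- inner integrand integrability
  have hU : ∀ c : X, MeasurableSet (gy ⁻¹' (ball c ρ)) := fun c =>
    (hgyc.isOpen_preimage _ isOpen_ball).measurableSet
  have hIeq : ∀ c : X, (fun b : ℝ => Set.indicator (ball c ρ) (fun _ => (1:ℝ)) (gy b)) =
      Set.indicator (gy ⁻¹' (ball c ρ)) (fun _ => (1:ℝ)) := by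
    intro c
    funext b
    by_cases hb : gy b ∈ ball c ρ
    · rw [Set.indicator_of_mem hb, Set.indicator_of_mem (Set.mem_preimage.mpr hb)]
    · rw [Set.indicator_of_notMem hb,
        Set.indicator_of_notMem (fun h => hb (Set.mem_preimage.mp h))]
  have hInner : ∀ c : X, IntegrableOn
      (fun b : ℝ => Set.indicator (ball c ρ) (fun _ => (1:ℝ)) (gy b))
      (Set.Icc (0:ℝ) (2 * t)) := by
    intro c
    rw [hIeq c]
    have hone : IntegrableOn (fun _ : ℝ => (1:ℝ)) (Set.Icc (0:ℝ) (2 * t)) := by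
      apply (integrableOn_const_iff (hC := by simp)).mpr
      right
      rw [Real.volume_Icc]
      exact ENNReal.ofReal_lt_top
    exact hone.indicator (hU c)
  -- the inner integral with continuous extension
  set F : ℝ → ℝ := fun a => ∫ b in Set.Icc (0:ℝ) (2 * t),
      Set.indicator (ball (gx a) ρ) (fun _ => (1:ℝ)) (gy b) with hF
  have hicc : MeasurableSet (Set.Icc (0:ℝ) (2 * t)) := measurableSet_Icc
  -- F is strongly measurable
  have hFmeas : StronglyMeasurable F := by
    have hD : StronglyMeasurable (Function.uncurry fun a b : ℝ =>
        Set.indicator (ball (gx a) ρ) (fun _ => (1:ℝ)) (gy b)) := by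
      have hset : MeasurableSet {q : ℝ × ℝ | dist (gx q.1) (gy q.2) < ρ} := by
        have : IsOpen {q : ℝ × ℝ | dist (gx q.1) (gy q.2) < ρ} := by
          have hc : Continuous fun q : ℝ × ℝ => dist (gx q.1) (gy q.2) :=
            (hgxc.comp continuous_fst).dist (hgyc.comp continuous_snd)
          exact isOpen_lt hc continuous_const
        exact this.measurableSet
      have : (Function.uncurry fun a b : ℝ =>
          Set.indicator (ball (gx a) ρ) (fun _ => (1:ℝ)) (gy b)) =
          Set.indicator {q : ℝ × ℝ | dist (gx q.1) (gy q.2) < ρ} (fun _ => (1:ℝ)) := by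
        funext q
        by_cases hq : gy q.2 ∈ ball (gx q.1) ρ
        · rw [Function.uncurry]
          rw [Set.indicator_of_mem hq, Set.indicator_of_mem]
          rw [Set.mem_setOf_eq, dist_comm]
          exact mem_ball.mp hq
        · rw [Function.uncurry]
          rw [Set.indicator_of_notMem hq, Set.indicator_of_notMem]
          rw [Set.mem_setOf_eq, dist_comm]
          exact fun h => hq (mem_ball.mpr h)
      rw [this]
      exact stronglyMeasurable_const.indicator hset
    exact hD.integral_prod_right
  -- F is bounded by 2t and nonnegative
  have hFnonneg : ∀ a, 0 ≤ F a := by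
    intro a
    apply integral_nonneg
    intro b
    exact Set.indicator_nonneg (fun _ _ => zero_le_one) _
  have hFbound : ∀ a, ‖F a‖ ≤ 2 * t := by
    intro a
    have : IsFiniteMeasure (volume.restrict (Set.Icc (0:ℝ) (2 * t))) := by
      constructor
      rw [Measure.restrict_apply_univ, Real.volume_Icc]
      exact ENNReal.ofReal_lt_top
    calc ‖F a‖ ≤ 1 * ((volume.restrict (Set.Icc (0:ℝ) (2 * t))) Set.univ).toReal := by
          apply norm_integral_le_of_norm_le_const
          filter_upwards with b
          by_cases hb : gy b ∈ ball (gx a) ρ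
          · rw [Set.indicator_of_mem hb]; simp
          · rw [Set.indicator_of_notMem hb]; simp
      _ ≤ 2 * t := by
          rw [Measure.restrict_apply_univ, Real.volume_Icc, one_mul]
          rw [ENNReal.toReal_ofReal (by linarith)]
          linarith
  have hFint : IntegrableOn F (Set.Icc (0:ℝ) (2 * t)) := by
    refine Integrable.mono' (integrable_const (2 * t)) hFmeas.aestronglyMeasurable ?_
    filter_upwards with a using hFbound a
  -- inner integral lower bound on J = [t₁, t₁+1]
  have hJsub : Set.Icc t₁ (t₁ + 1) ⊆ Set.Icc (0:ℝ) (2 * t) := by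
    intro s hs
    exact ⟨by linarith [hs.1], by linarith [hs.2]⟩
  have hinner_ge : ∀ t₁' ∈ Set.Icc t₁ (t₁ + 1), r ≤ F t₁' := by
    intro t₁' ht₁'
    have ht₁'0 : 0 ≤ t₁' := by linarith [ht₁'.1]
    set u := t₁' - t₁ with hu
    set a : ℝ := min (t₂ + u) (2 * t - r) with ha
    have hu0 : 0 ≤ u := by simp only [hu]; linarith [ht₁'.1]
    have hu1 : u ≤ 1 := by simp only [hu]; linarith [ht₁'.2]
    have ha0 : 0 ≤ a := le_min (by linarith) (by linarith)
    have har : a + r ≤ 2 * t := by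
      have := min_le_right (t₂ + u) (2 * t - r)
      linarith
    have hIsub : Set.Icc a (a + r) ⊆ Set.Icc (0:ℝ) (2 * t) := by
      intro s hs
      exact ⟨by linarith [hs.1], by linarith [hs.2]⟩
    have hmem : ∀ b ∈ Set.Icc a (a + r), gy b ∈ ball (gx t₁') ρ := by
      intro b hb
      have hb0 : 0 ≤ b := le_trans ha0 hb.1
      have hgyb : gy b = Ψ b y := by rw [hgy]; simp [max_eq_left hb0]
      have hgxt : gx t₁' = Ψ t₁' x := by rw [hgx]; simp [max_eq_left ht₁'0]
      rw [hgyb, hgxt]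
      apply hkey t₁' ht₁' b hb0
      rw [abs_le]
      constructor
      · -- -(r) ≤ b - (t₂ + u) : i.e. (t₂+u) - b ≤ r
        have h1 : a ≤ b := hb.1
        have htu : t₂ + u ≤ 2 * t := by linarith
        rcases min_cases (t₂ + u) (2 * t - r) with ⟨he, _⟩ | ⟨he, _⟩ <;>
          rw [ha, he] at h1 <;> linarith
      · -- b - (t₂+u) ≤ r
        have h1 : b ≤ a + r := hb.2
        have h2 : a ≤ t₂ + u := min_le_left _ _
        linarith
    -- F t₁' ≥ ∫ over Icc a (a+r) of integrand = r
    have step1 : ∫ b in Set.Icc a (a + r),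
        Set.indicator (ball (gx t₁') ρ) (fun _ => (1:ℝ)) (gy b) ≤ F t₁' := by
      apply setIntegral_mono_set (hInner (gx t₁'))
      · filter_upwards with b using Set.indicator_nonneg (fun _ _ => zero_le_one) _
      · exact HasSubset.Subset.eventuallyLE hIsub
    have step2 : ∫ b in Set.Icc a (a + r),
        Set.indicator (ball (gx t₁') ρ) (fun _ => (1:ℝ)) (gy b) = r := by
      rw [setIntegral_congr_fun measurableSet_Icc
        (g := fun _ => (1:ℝ)) (fun b hb => Set.indicator_of_mem (hmem b hb) _)]
      rw [setIntegral_const, Real.volume_real_Icc, smul_eq_mul, mul_one]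
      rw [add_sub_cancel_left, max_eq_left hr.le]
    linarith
  -- relate flowCorrSum to F
  have hcorr : flowCorrSum Ψ (2 * t) ρ x y = ∫ a in Set.Icc (0:ℝ) (2 * t), F a := by
    rw [flowCorrSum]
    apply setIntegral_congr_fun hicc
    intro a haI
    have hgxa : gx a = Ψ a x := by rw [hgx]; simp [max_eq_left haI.1]
    rw [hF]
    apply setIntegral_congr_fun hicc
    intro b hbI
    have hgyb : gy b = Ψ b y := by rw [hgy]; simp [max_eq_left hbI.1]
    simp only [hgxa, hgyb]
  rw [hcorr]
  -- outer lower bound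
  have houter1 : ∫ a in Set.Icc t₁ (t₁ + 1), F a ≤ ∫ a in Set.Icc (0:ℝ) (2 * t), F a := by
    apply setIntegral_mono_set hFint
    · filter_upwards with a using hFnonneg a
    · exact HasSubset.Subset.eventuallyLE hJsub
  have houter2 : r ≤ ∫ a in Set.Icc t₁ (t₁ + 1), F a := by
    have : ∫ a in Set.Icc t₁ (t₁ + 1), (r:ℝ) ≤ ∫ a in Set.Icc t₁ (t₁ + 1), F a := by
      apply setIntegral_mono_on ((integrableOn_const_iff (hC := by simp)).mpr (Or.inr ?_))
        (hFint.mono_set hJsub) measurableSet_Icc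
      · exact fun a haJ => hinner_ge a haJ
      · rw [Real.volume_Icc]; exact ENNReal.ofReal_lt_top
    rw [setIntegral_const, Real.volume_real_Icc, smul_eq_mul] at this
    simp only [add_sub_cancel_left] at this
    rw [max_eq_left zero_le_one, one_mul] at this
    exact this
  linarith
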